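/- Let F be a Finsler metric on an open set U ⊆ ℝⁿ and let V : U → ℝⁿ be a C^∞ nonvanishing vector field. Let ĝ be the Riemannian metric on U defined by ĝₓ := g^x_{V(x)}. Let Γ be the Chern connection associated with V (i.e., Γₓ is symmetric bilinear, smooth in x, and the covariant derivative (∇^V_X Y)(x) := DY(x)[X(x)] + Γₓ(X(x),Y(x)) satisfies the almost-g-compatibility identity X·g^·_{V}(Y,Z) = g_V(∇^V_X Y, Z) + g_V(Y, ∇^V_X Z) + 2C_V(∇^V_X V, Y, Z) for all smooth vector fields X,Y,Z), and let Γ̂ be the Levi-Civita connection of ĝ (i.e., Γ̂ₓ is symmetric bilinear, smooth in x, and ∇̂_X Y := DY[X] + Γ̂(X,Y) satisfies X·ĝ(Y,Z) = ĝ(∇̂_X Y, Z) + ĝ(Y, ∇̂_X Z) for all smooth vector fields X,Y,Z). Then ∇^V_V V = ∇̂_V V at every point of U. In particular, the integral curves of V are unparametrized geodesics of F if and only if they are geodesics of the Riemannian metric ĝ. -/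

import Mathlib

/-- The fundamental tensor of a Finsler metric `F` at base point `x` and direction `v`,
evaluated on `(u, w)`: one half of the second Fréchet (vertical) derivative of
`v ↦ F(x,v)²` at `v`. -/
noncomputable def gF {n : ℕ} (F : (Fin n → ℝ) → (Fin n → ℝ) → ℝ)
    (x v u w : Fin n → ℝ) : ℝ :=
  (1 / 2) * iteratedFDeriv ℝ 2 (fun y => F x y ^ 2) v ![u, w]

/-- The Cartan tensor of a Finsler metric `F` at base point `x` and direction `v`:
one quarter of the third Fréchet (vertical) derivative of `v ↦ F(x,v)²` at `v`. -/
noncomputable def cartanF {n : ℕ} (F : (Fin n → ℝ) → (Fin n → ℝ) → ℝ)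
    (x v w₁ w₂ w₃ : Fin n → ℝ) : ℝ :=
  (1 / 4) * iteratedFDeriv ℝ 3 (fun y => F x y ^ 2) v ![w₁, w₂, w₃]

/-- `F` is a Finsler metric on the set `U ⊆ ℝⁿ`. -/
structure IsFinslerMetric {n : ℕ} (U : Set (Fin n → ℝ))
    (F : (Fin n → ℝ) → (Fin n → ℝ) → ℝ) : Prop where
  smooth : ContDiffOn ℝ (⊤ : ℕ∞) (fun p : (Fin n → ℝ) × (Fin n → ℝ) => F p.1 p.2)
    (U ×ˢ {(0 : Fin n → ℝ)}ᶜ)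
  homog : ∀ x ∈ U, ∀ c : ℝ, 0 < c → ∀ v : Fin n → ℝ, F x (c • v) = c * F x v
  pos : ∀ x ∈ U, ∀ v : Fin n → ℝ, v ≠ 0 → 0 < F x v
  posdef : ∀ x ∈ U, ∀ v : Fin n → ℝ, v ≠ 0 → ∀ u : Fin n → ℝ, u ≠ 0 → 0 < gF F x v u u

/-- `Γ` is the Chern connection of the Finsler metric `F` on `U` associated with the
nonvanishing reference vector field `V`: a smooth field of symmetric bilinear maps such
that the covariant derivative `∇^V_X Y = DY[X] + Γ(X,Y)` is almost `g`-compatible. -/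
def IsChernConnection {n : ℕ} (U : Set (Fin n → ℝ))
    (F : (Fin n → ℝ) → (Fin n → ℝ) → ℝ) (V : (Fin n → ℝ) → (Fin n → ℝ))
    (Γ : (Fin n → ℝ) → (Fin n → ℝ) →ₗ[ℝ] (Fin n → ℝ) →ₗ[ℝ] (Fin n → ℝ)) : Prop :=
  (∀ x ∈ U, ∀ u w : Fin n → ℝ, Γ x u w = Γ x w u) ∧
  (∀ u w : Fin n → ℝ, ContDiffOn ℝ (⊤ : ℕ∞) (fun x => Γ x u w) U) ∧
  (∀ X Y Z : (Fin n → ℝ) → (Fin n → ℝ),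
    ContDiffOn ℝ (⊤ : ℕ∞) X U → ContDiffOn ℝ (⊤ : ℕ∞) Y U → ContDiffOn ℝ (⊤ : ℕ∞) Z U →
    ∀ x ∈ U,
      fderiv ℝ (fun y => gF F y (V y) (Y y) (Z y)) x (X x) =
        gF F x (V x) (fderiv ℝ Y x (X x) + Γ x (X x) (Y x)) (Z x) +
        gF F x (V x) (Y x) (fderiv ℝ Z x (X x) + Γ x (X x) (Z x)) +
        2 * cartanF F x (V x) (fderiv ℝ V x (X x) + Γ x (X x) (V x)) (Y x) (Z x))

/-- `Γ̂` is the Levi-Civita connection on `U` of the (Riemannian) metric `g`: a smooth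
field of symmetric bilinear maps whose covariant derivative `∇̂_X Y = DY[X] + Γ̂(X,Y)`
is compatible with `g`. -/
def IsLeviCivitaConnection {n : ℕ} (U : Set (Fin n → ℝ))
    (g : (Fin n → ℝ) → (Fin n → ℝ) → (Fin n → ℝ) → ℝ)
    (Γ : (Fin n → ℝ) → (Fin n → ℝ) →ₗ[ℝ] (Fin n → ℝ) →ₗ[ℝ] (Fin n → ℝ)) : Prop :=
  (∀ x ∈ U, ∀ u w : Fin n → ℝ, Γ x u w = Γ x w u) ∧
  (∀ u w : Fin n → ℝ, ContDiffOn ℝ (⊤ : ℕ∞) (fun x => Γ x u w) U) ∧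
  (∀ X Y Z : (Fin n → ℝ) → (Fin n → ℝ),
    ContDiffOn ℝ (⊤ : ℕ∞) X U → ContDiffOn ℝ (⊤ : ℕ∞) Y U → ContDiffOn ℝ (⊤ : ℕ∞) Z U →
    ∀ x ∈ U,
      fderiv ℝ (fun y => g y (Y y) (Z y)) x (X x) =
        g x (fderiv ℝ Y x (X x) + Γ x (X x) (Y x)) (Z x) +
        g x (Y x) (fderiv ℝ Z x (X x) + Γ x (X x) (Z x)))

open Filter Topology

variable {E : Type*} [NormedAddCommGroup E] [NormedSpace ℝ E]

section helpers

variable {f : E → ℝ}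

lemma aux_contDiffAt (hf : ContDiffOn ℝ (⊤ : ℕ∞) f {(0:E)}ᶜ) {y : E} (hy : y ≠ 0) :
    ContDiffAt ℝ (⊤ : ℕ∞) f y :=
  hf.contDiffAt (isOpen_compl_singleton.mem_nhds hy)

lemma fderiv_homog (hf : ContDiffOn ℝ (⊤ : ℕ∞) f {(0:E)}ᶜ)
    (hhom : ∀ c : ℝ, 0 < c → ∀ y, f (c • y) = c ^ 2 * f y)
    {c : ℝ} (hc : 0 < c) {y : E} (hy : y ≠ 0) :
    fderiv ℝ f (c • y) = c • fderiv ℝ f y := by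
  have hc0 : c ≠ 0 := ne_of_gt hc
  have hcy : c • y ≠ 0 := smul_ne_zero hc0 hy
  have hd1 : DifferentiableAt ℝ f (c • y) :=
    (aux_contDiffAt hf hcy).differentiableAt (by simp)
  have hd2 : DifferentiableAt ℝ f y :=
    (aux_contDiffAt hf hy).differentiableAt (by simp)
  have hsm : HasFDerivAt (fun z : E => c • z) (c • ContinuousLinearMap.id ℝ E) y :=
    (hasFDerivAt_id y).const_smul c
  have h1 : HasFDerivAt (fun z => f (c • z))
      ((fderiv ℝ f (c • y)).comp (c • ContinuousLinearMap.id ℝ E)) y :=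
    hd1.hasFDerivAt.comp y hsm
  have hfun : (fun z => f (c • z)) = fun z => (c ^ 2) • f z := by
    funext z; rw [hhom c hc z, smul_eq_mul]
  have h2 : HasFDerivAt (fun z => f (c • z)) ((c ^ 2) • fderiv ℝ f y) y := by
    rw [hfun]; exact hd2.hasFDerivAt.const_smul (c ^ 2 : ℝ)
  have h3 := h1.unique h2
  ext u
  have h4 := congrArg (fun L : E →L[ℝ] ℝ => L u) h3
  simp only [ContinuousLinearMap.coe_comp', Function.comp_apply,
    ContinuousLinearMap.smul_apply, ContinuousLinearMap.coe_id', id_eq,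
    ContinuousLinearMap.map_smul, smul_eq_mul] at h4
  -- h4 : c * fderiv ℝ f (c • y) u = c ^ 2 * fderiv ℝ f y u  (hopefully)
  have : fderiv ℝ f (c • y) u = c * fderiv ℝ f y u := by
    apply mul_left_cancel₀ hc0
    linear_combination h4
  simpa [smul_eq_mul] using this

lemma fderiv2_homog (hf : ContDiffOn ℝ (⊤ : ℕ∞) f {(0:E)}ᶜ)
    (hhom : ∀ c : ℝ, 0 < c → ∀ y, f (c • y) = c ^ 2 * f y)
    {c : ℝ} (hc : 0 < c) {y : E} (hy : y ≠ 0) :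
    fderiv ℝ (fderiv ℝ f) (c • y) = fderiv ℝ (fderiv ℝ f) y := by
  have hc0 : c ≠ 0 := ne_of_gt hc
  have hcy : c • y ≠ 0 := smul_ne_zero hc0 hy
  have hgc : DifferentiableAt ℝ (fderiv ℝ f) (c • y) :=
    ((aux_contDiffAt hf hcy).fderiv_right (m := 1) (WithTop.coe_le_coe.mpr le_top)).differentiableAt one_ne_zero
  have hgy : DifferentiableAt ℝ (fderiv ℝ f) y :=
    ((aux_contDiffAt hf hy).fderiv_right (m := 1) (WithTop.coe_le_coe.mpr le_top)).differentiableAt one_ne_zero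
  have hev : (fun z => fderiv ℝ f (c • z)) =ᶠ[𝓝 y] fun z => c • fderiv ℝ f z := by
    filter_upwards [isOpen_compl_singleton.mem_nhds
      (Set.mem_compl_singleton_iff.mpr hy)] with z hz
    exact fderiv_homog hf hhom hc hz
  have h1 : fderiv ℝ (fun z => fderiv ℝ f (c • z)) y
      = fderiv ℝ (fun z => c • fderiv ℝ f z) y := hev.fderiv_eq
  have hsm : HasFDerivAt (fun z : E => c • z) (c • ContinuousLinearMap.id ℝ E) y :=
    (hasFDerivAt_id y).const_smul c
  have h2 : fderiv ℝ (fun z => fderiv ℝ f (c • z)) y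
      = (fderiv ℝ (fderiv ℝ f) (c • y)).comp (c • ContinuousLinearMap.id ℝ E) :=
    (hgc.hasFDerivAt.comp y hsm).fderiv
  have h3 : fderiv ℝ (fun z => c • fderiv ℝ f z) y = c • fderiv ℝ (fderiv ℝ f) y :=
    fderiv_const_smul hgy c
  have h4 := h2.symm.trans (h1.trans h3)
  ext u w
  have h5 := congrArg (fun L => L u w) h4
  simp only [ContinuousLinearMap.coe_comp', Function.comp_apply,
    ContinuousLinearMap.smul_apply, ContinuousLinearMap.coe_id', id_eq,
    ContinuousLinearMap.map_smul, smul_eq_mul] at h5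
  exact mul_left_cancel₀ hc0 h5





/-- evaluation of the derivative of a CLM-of-CLM valued map -/
lemma fderiv_apply₂ {H : E → E →L[ℝ] E →L[ℝ] ℝ} {v : E}
    (hH : DifferentiableAt ℝ H v) (b c a : E) :
    fderiv ℝ (fun y => H y b c) v a = fderiv ℝ H v a b c := by
  have h0 := (hH.hasFDerivAt.clm_apply (hasFDerivAt_const b v)).clm_apply (hasFDerivAt_const c v)
  rw [h0.fderiv]; simp

lemma fderiv_apply_multi {G : E → ContinuousMultilinearMap ℝ (fun _ : Fin 2 => E) ℝ} {v : E}
    (hG : DifferentiableAt ℝ G v) (m : Fin 2 → E) (a : E) :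
    fderiv ℝ (fun y => G y m) v a = fderiv ℝ G v a m := by
  have h0 := ((ContinuousMultilinearMap.apply ℝ (fun _ : Fin 2 => E) ℝ m).hasFDerivAt
      (x := G v)).comp v hG.hasFDerivAt
  have h : HasFDerivAt (fun y => G y m)
      ((ContinuousMultilinearMap.apply ℝ (fun _ : Fin 2 => E) ℝ m).comp (fderiv ℝ G v)) v := h0
  rw [h.fderiv]; rfl

lemma diffH (hf : ContDiffOn ℝ (⊤ : ℕ∞) f {(0:E)}ᶜ) {v : E} (hv : v ≠ 0) :
    DifferentiableAt ℝ (fderiv ℝ (fderiv ℝ f)) v :=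
  (((aux_contDiffAt hf hv).fderiv_right (m := 2) (WithTop.coe_le_coe.mpr le_top)).fderiv_right
    (m := 1) (by norm_num)).differentiableAt one_ne_zero

lemma fderiv3_vv (hf : ContDiffOn ℝ (⊤ : ℕ∞) f {(0:E)}ᶜ)
    (hhom : ∀ c : ℝ, 0 < c → ∀ y, f (c • y) = c ^ 2 * f y)
    {v : E} (hv : v ≠ 0) :
    fderiv ℝ (fderiv ℝ (fderiv ℝ f)) v v = 0 := by
  set H := fderiv ℝ (fderiv ℝ f) with hH
  have hHd : DifferentiableAt ℝ H v := diffH hf hv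
  have line : HasDerivAt (fun t : ℝ => v + t • v) v 0 := by
    have h1 : HasDerivAt (fun t : ℝ => t • v) ((1:ℝ) • v) 0 :=
      (hasDerivAt_id (0:ℝ)).smul_const v
    simpa using h1.const_add v
  have hfd : HasFDerivAt H (fderiv ℝ H v) ((fun t : ℝ => v + t • v) 0) := by
    simpa using hHd.hasFDerivAt
  have comp : HasDerivAt (fun t : ℝ => H (v + t • v)) (fderiv ℝ H v v) 0 :=
    HasFDerivAt.comp_hasDerivAt (l := H) (f := fun t : ℝ => v + t • v) 0 hfd line
  have hev : ∀ᶠ t in 𝓝 (0:ℝ), H (v + t • v) = H v := by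
    filter_upwards [eventually_gt_nhds (show (-1:ℝ) < 0 by norm_num)] with t ht
    have h1t : (0:ℝ) < 1 + t := by linarith
    have hrw : v + t • v = (1 + t) • v := by rw [add_smul, one_smul]
    rw [hrw, hH, fderiv2_homog hf hhom h1t hv]
  have const : HasDerivAt (fun t : ℝ => H (v + t • v)) 0 0 :=
    (hasDerivAt_const (0:ℝ) (H v)).congr_of_eventuallyEq hev
  exact HasDerivAt.unique (𝕜 := ℝ) comp const

lemma eval3 (hf : ContDiffOn ℝ (⊤ : ℕ∞) f {(0:E)}ᶜ) {v : E} (hv : v ≠ 0) (a b c : E) :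
    iteratedFDeriv ℝ 3 f v ![a, b, c] = fderiv ℝ (fderiv ℝ (fderiv ℝ f)) v a b c := by
  have hG : DifferentiableAt ℝ (iteratedFDeriv ℝ 2 f) v :=
    ((aux_contDiffAt hf hv).iteratedFDeriv_right (i := 2) (m := 1)
      (WithTop.coe_le_coe.mpr le_top)).differentiableAt one_ne_zero
  have h0 : iteratedFDeriv ℝ 3 f v ![a, b, c]
      = fderiv ℝ (iteratedFDeriv ℝ 2 f) v a ![b, c] := by
    have := iteratedFDeriv_succ_apply_left (𝕜 := ℝ) (f := f) (x := v) (n := 2) ![a, b, c]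
    simpa [Matrix.tail_cons] using this
  have h1 : fderiv ℝ (iteratedFDeriv ℝ 2 f) v a ![b, c]
      = fderiv ℝ (fun y => iteratedFDeriv ℝ 2 f y ![b, c]) v a :=
    (fderiv_apply_multi hG ![b, c] a).symm
  have h2 : (fun y => iteratedFDeriv ℝ 2 f y ![b, c])
      = fun y => fderiv ℝ (fderiv ℝ f) y b c := by
    funext y
    rw [iteratedFDeriv_two_apply]
    simp
  have h3 : fderiv ℝ (fun y => fderiv ℝ (fderiv ℝ f) y b c) v a
      = fderiv ℝ (fderiv ℝ (fderiv ℝ f)) v a b c :=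
    fderiv_apply₂ (diffH hf hv) b c a
  rw [h0, h1, h2, h3]

lemma sym12 (hf : ContDiffOn ℝ (⊤ : ℕ∞) f {(0:E)}ᶜ) {v : E} (hv : v ≠ 0) (a b : E) :
    fderiv ℝ (fderiv ℝ (fderiv ℝ f)) v a b = fderiv ℝ (fderiv ℝ (fderiv ℝ f)) v b a := by
  have hg : ContDiffAt ℝ 2 (fderiv ℝ f) v :=
    (aux_contDiffAt hf hv).fderiv_right (m := 2) (WithTop.coe_le_coe.mpr le_top)
  exact hg.isSymmSndFDerivAt (by simp) a b

lemma sym23 (hf : ContDiffOn ℝ (⊤ : ℕ∞) f {(0:E)}ᶜ) {v : E} (hv : v ≠ 0) (a b c : E) :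
    fderiv ℝ (fderiv ℝ (fderiv ℝ f)) v a b c
      = fderiv ℝ (fderiv ℝ (fderiv ℝ f)) v a c b := by
  have hev : (fun y => fderiv ℝ (fderiv ℝ f) y b c)
      =ᶠ[𝓝 v] fun y => fderiv ℝ (fderiv ℝ f) y c b := by
    filter_upwards [isOpen_compl_singleton.mem_nhds
      (Set.mem_compl_singleton_iff.mpr hv)] with z hz
    exact ((aux_contDiffAt hf hz).isSymmSndFDerivAt (by rw [minSmoothness_of_isRCLikeNormedField]; exact WithTop.coe_le_coe.mpr le_top)) b c
  have h1 := fderiv_apply₂ (diffH hf hv) b c a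
  have h2 := fderiv_apply₂ (diffH hf hv) c b a
  rw [← h1, ← h2, hev.fderiv_eq]

end helpers

section gFlemmas

variable {n : ℕ}

lemma gF_eq (F : (Fin n → ℝ) → (Fin n → ℝ) → ℝ) (x v u w : Fin n → ℝ) :
    gF F x v u w = (1 / 2) * fderiv ℝ (fderiv ℝ (fun y => F x y ^ 2)) v u w := by
  rw [gF, iteratedFDeriv_two_apply]
  simp

lemma cartanF_eq {F : (Fin n → ℝ) → (Fin n → ℝ) → ℝ} {x v : Fin n → ℝ}
    (hf : ContDiffOn ℝ (⊤ : ℕ∞) (fun y => F x y ^ 2) {(0 : Fin n → ℝ)}ᶜ) (hv : v ≠ 0)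
    (p q r : Fin n → ℝ) :
    cartanF F x v p q r
      = (1 / 4) * fderiv ℝ (fderiv ℝ (fderiv ℝ (fun y => F x y ^ 2))) v p q r := by
  rw [cartanF, eval3 hf hv]

end gFlemmas

/-- Let `ĝ` be the Riemannian metric `ĝₓ = g^x_{V(x)}` induced by a Finsler metric `F`
and a smooth nonvanishing vector field `V` on `U`.  Then the Chern covariant derivative
`∇^V_V V` coincides with the Levi-Civita covariant derivative `∇̂_V V` of `ĝ` at every
point of `U`. -/
theorem chern_eq_leviCivita_along_V {n : ℕ} (U : Set (Fin n → ℝ)) (hU : IsOpen U)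
    (F : (Fin n → ℝ) → (Fin n → ℝ) → ℝ) (hF : IsFinslerMetric U F)
    (V : (Fin n → ℝ) → (Fin n → ℝ)) (hV : ContDiffOn ℝ (⊤ : ℕ∞) V U)
    (hV0 : ∀ x ∈ U, V x ≠ 0)
    (Γ : (Fin n → ℝ) → (Fin n → ℝ) →ₗ[ℝ] (Fin n → ℝ) →ₗ[ℝ] (Fin n → ℝ))
    (hΓ : IsChernConnection U F V Γ)
    (Γhat : (Fin n → ℝ) → (Fin n → ℝ) →ₗ[ℝ] (Fin n → ℝ) →ₗ[ℝ] (Fin n → ℝ))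
    (hΓhat : IsLeviCivitaConnection U (fun x => gF F x (V x)) Γhat) :
    ∀ x ∈ U,
      fderiv ℝ V x (V x) + Γ x (V x) (V x) = fderiv ℝ V x (V x) + Γhat x (V x) (V x) := by
  intro x hx
  obtain ⟨hΓsym, -, hΓcomp⟩ := hΓ
  obtain ⟨hΓhsym, -, hΓhcomp⟩ := hΓhat
  have hvne : V x ≠ 0 := hV0 x hx
  -- smoothness of the vertical function f = F x ·  squared
  have hfF : ContDiffOn ℝ (⊤ : ℕ∞) (fun y : Fin n → ℝ => F x y) {(0 : Fin n → ℝ)}ᶜ := by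
    have := hF.smooth.comp (f := fun y : Fin n → ℝ => ((x, y) : (Fin n → ℝ) × (Fin n → ℝ)))
      (contDiffOn_const.prodMk contDiffOn_id) (fun y hy => ⟨hx, hy⟩)
    exact this
  have hf : ContDiffOn ℝ (⊤ : ℕ∞) (fun y => F x y ^ 2) {(0 : Fin n → ℝ)}ᶜ := hfF.pow 2
  have hhom : ∀ c : ℝ, 0 < c → ∀ y, (fun y => F x y ^ 2) (c • y) = c ^ 2 * (fun y => F x y ^ 2) y := by
    intro c hc y
    simp only
    rw [hF.homog x hx c hc y]
    ring
  -- Cartan tensor vanishing when the reference vector occupies a slot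
  have hcm : ∀ p r : Fin n → ℝ, cartanF F x (V x) p (V x) r = 0 := by
    intro p r
    rw [cartanF_eq hf hvne]
    have h12 := congrArg (fun L : (Fin n → ℝ) →L[ℝ] ℝ => L r) (sym12 hf hvne p (V x))
    rw [h12, fderiv3_vv hf hhom hvne]
    simp
  have hcl : ∀ p r : Fin n → ℝ, cartanF F x (V x) p r (V x) = 0 := by
    intro p r
    rw [cartanF_eq hf hvne, sym23 hf hvne p r (V x)]
    have h12 := congrArg (fun L : (Fin n → ℝ) →L[ℝ] ℝ => L r) (sym12 hf hvne p (V x))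
    rw [h12, fderiv3_vv hf hhom hvne]
    simp
  -- basic properties of the metric g := gF F x (V x)
  have hsymg : ∀ u w : Fin n → ℝ, gF F x (V x) u w = gF F x (V x) w u := by
    intro u w
    rw [gF_eq, gF_eq]
    rw [(aux_contDiffAt hf hvne).isSymmSndFDerivAt (by rw [minSmoothness_of_isRCLikeNormedField]; exact WithTop.coe_le_coe.mpr le_top) u w]
  have haddg : ∀ u a b : Fin n → ℝ,
      gF F x (V x) u (a + b) = gF F x (V x) u a + gF F x (V x) u b := by
    intro u a b
    rw [gF_eq, gF_eq, gF_eq, map_add]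
    ring
  have hsubg : ∀ a b w : Fin n → ℝ,
      gF F x (V x) (a - b) w = gF F x (V x) a w - gF F x (V x) b w := by
    intro a b w
    rw [gF_eq, gF_eq, gF_eq, map_sub, ContinuousLinearMap.sub_apply]
    ring
  -- the key pointwise identity, for every direction w
  have key : ∀ w : Fin n → ℝ,
      gF F x (V x) (fderiv ℝ V x (V x) + Γ x (V x) (V x)) w
        = gF F x (V x) (fderiv ℝ V x (V x) + Γhat x (V x) (V x)) w := by
    intro w
    have e1 := hΓcomp V V (fun _ => w) hV hV contDiffOn_const x hx
    have e2 := hΓcomp (fun _ => w) V V contDiffOn_const hV hV x hx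
    have e3 := hΓcomp V (fun _ => w) V hV contDiffOn_const hV x hx
    have e1' := hΓhcomp V V (fun _ => w) hV hV contDiffOn_const x hx
    have e2' := hΓhcomp (fun _ => w) V V contDiffOn_const hV hV x hx
    have e3' := hΓhcomp V (fun _ => w) V hV contDiffOn_const hV x hx
    simp only [fderiv_const, fderiv_fun_const, Pi.zero_apply, ContinuousLinearMap.zero_apply, zero_add,
      hcm, hcl, mul_zero, add_zero] at e1 e2 e3 e1' e2' e3'
    -- abbreviations
    set A := fderiv ℝ V x (V x) + Γ x (V x) (V x) with hA
    set B := fderiv ℝ V x (V x) + Γhat x (V x) (V x) with hB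
    set Dw := fderiv ℝ V x w with hDw
    -- auxiliary symmetry/linearity facts feeding linarith
    have hPsym : Γ x (V x) w = Γ x w (V x) := hΓsym x hx (V x) w
    have gs1 : gF F x (V x) (Γ x (V x) w) (V x) = gF F x (V x) (V x) (Γ x (V x) w) :=
      hsymg _ _
    have gs1' : gF F x (V x) (Γhat x (V x) w) (V x) = gF F x (V x) (V x) (Γhat x (V x) w) :=
      hsymg _ _
    have gs2 : gF F x (V x) w A = gF F x (V x) A w := hsymg _ _
    have gs2' : gF F x (V x) w B = gF F x (V x) B w := hsymg _ _
    have gs3 : gF F x (V x) (Dw + Γ x w (V x)) (V x)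
        = gF F x (V x) (V x) (Dw + Γ x w (V x)) := hsymg _ _
    have gs3' : gF F x (V x) (Dw + Γhat x w (V x)) (V x)
        = gF F x (V x) (V x) (Dw + Γhat x w (V x)) := hsymg _ _
    have ga1 : gF F x (V x) (V x) (Dw + Γ x w (V x))
        = gF F x (V x) (V x) Dw + gF F x (V x) (V x) (Γ x w (V x)) := haddg _ _ _
    have ga1' : gF F x (V x) (V x) (Dw + Γhat x w (V x))
        = gF F x (V x) (V x) Dw + gF F x (V x) (V x) (Γhat x w (V x)) := haddg _ _ _
    have gP : gF F x (V x) (V x) (Γ x (V x) w) = gF F x (V x) (V x) (Γ x w (V x)) := by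
      rw [hPsym]
    have hQsym : Γhat x (V x) w = Γhat x w (V x) := hΓhsym x hx (V x) w
    have gQ : gF F x (V x) (V x) (Γhat x (V x) w) = gF F x (V x) (V x) (Γhat x w (V x)) := by
      rw [hQsym]
    linarith [e1, e2, e3, e1', e2', e3']
  -- nondegeneracy: conclude equality of the two covariant derivatives
  by_contra hne
  have hd0 : (fderiv ℝ V x (V x) + Γ x (V x) (V x))
      - (fderiv ℝ V x (V x) + Γhat x (V x) (V x)) ≠ 0 := sub_ne_zero.mpr hne
  have hpos := hF.posdef x hx (V x) hvne _ hd0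
  have hzero : gF F x (V x)
      ((fderiv ℝ V x (V x) + Γ x (V x) (V x)) - (fderiv ℝ V x (V x) + Γhat x (V x) (V x)))
      ((fderiv ℝ V x (V x) + Γ x (V x) (V x)) - (fderiv ℝ V x (V x) + Γhat x (V x) (V x)))
      = 0 := by
    rw [hsubg, key]
    ring
  linarith
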